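/- Let v₁, v₂ ∈ ℤ² be primitive linearly independent integral vectors. Then the image of ℤ² under the quotient map ℝ² → ℝ²/ℝv₁ is the lattice generated by (1/|det(v₁,v₂)|) · v̄₂, where v̄₂ is the image of v₂. -/

import Mathlib

lemma aux_mem_span (v x : Fin 2 → ℝ) (hv : v 0 ≠ 0 ∨ v 1 ≠ 0) :
    x ∈ Submodule.span ℝ ({v} : Set (Fin 2 → ℝ)) ↔ v 0 * x 1 - v 1 * x 0 = 0 := by
  rw [Submodule.mem_span_singleton]
  constructor
  · rintro ⟨c, rfl⟩
    simp only [Pi.smul_apply, smul_eq_mul]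
    ring
  · intro h
    rcases hv with h0 | h1
    · refine ⟨x 0 / v 0, funext fun i => ?_⟩
      fin_cases i <;> simp only [Pi.smul_apply, smul_eq_mul] <;> field_simp <;> simp only [Fin.zero_eta, Fin.mk_one] <;> linarith
    · refine ⟨x 1 / v 1, funext fun i => ?_⟩
      fin_cases i <;> simp only [Pi.smul_apply, smul_eq_mul] <;> field_simp <;> simp only [Fin.zero_eta, Fin.mk_one] <;> linarith

/-- The image of `ℤ²` in `ℝ²/ℝv₁` is the lattice generated by `v̄₂ / |det(v₁,v₂)|`. -/
theorem projected_lattice_eq (v₁ v₂ : Fin 2 → ℤ)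
    (hprim : IsCoprime (v₁ 0) (v₁ 1))
    (hdet : v₁ 0 * v₂ 1 - v₁ 1 * v₂ 0 ≠ 0) :
    let v₁ℝ : Fin 2 → ℝ := fun i => (v₁ i : ℝ)
    let v₂ℝ : Fin 2 → ℝ := fun i => (v₂ i : ℝ)
    let π := (Submodule.span ℝ ({v₁ℝ} : Set (Fin 2 → ℝ))).mkQ
    π '' {x : Fin 2 → ℝ | ∀ i, ∃ n : ℤ, x i = (n : ℝ)} =
      {y | ∃ n : ℤ, y = n • ((|((v₁ 0 * v₂ 1 - v₁ 1 * v₂ 0 : ℤ) : ℝ)|)⁻¹ • π v₂ℝ)} := by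
  intro v₁ℝ v₂ℝ π
  set d : ℤ := v₁ 0 * v₂ 1 - v₁ 1 * v₂ 0 with hddef
  have hdR : ((d : ℤ) : ℝ) ≠ 0 := Int.cast_ne_zero.mpr hdet
  have habs : |((d : ℤ) : ℝ)| ≠ 0 := abs_ne_zero.mpr hdR
  have hv0 : v₁ℝ 0 ≠ 0 ∨ v₁ℝ 1 ≠ 0 := by
    by_contra h
    push_neg at h
    obtain ⟨a, b, hab⟩ := hprim
    have h0' : ((v₁ 0 : ℤ) : ℝ) = 0 := h.1
    have h1' : ((v₁ 1 : ℤ) : ℝ) = 0 := h.2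
    have h0 : v₁ 0 = 0 := by exact_mod_cast h0'
    have h1 : v₁ 1 = 0 := by exact_mod_cast h1'
    rw [h0, h1] at hab
    simp at hab
  have key : ∀ x z : Fin 2 → ℝ, π x = π z ↔
      v₁ℝ 0 * x 1 - v₁ℝ 1 * x 0 = v₁ℝ 0 * z 1 - v₁ℝ 1 * z 0 := by
    intro x z
    have h1 : π x = π z ↔ x - z ∈ Submodule.span ℝ ({v₁ℝ} : Set (Fin 2 → ℝ)) := by
      simp only [π, Submodule.mkQ_apply]
      exact Submodule.Quotient.eq _
    rw [h1, aux_mem_span v₁ℝ (x - z) hv0]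
    simp only [Pi.sub_apply]
    constructor <;> intro h <;> linarith
  have hrhs : ∀ n : ℤ, n • ((|((d : ℤ) : ℝ)|)⁻¹ • π v₂ℝ)
      = π (((n : ℝ) * (|((d : ℤ) : ℝ)|)⁻¹) • v₂ℝ) := by
    intro n
    rw [map_smul, ← Int.cast_smul_eq_zsmul ℝ, smul_smul]
  have hsign : ((Int.sign d : ℤ) : ℝ) * ((d : ℤ) : ℝ) = |((d : ℤ) : ℝ)| := by
    rcases hdet.lt_or_gt with h | h
    · rw [Int.sign_eq_neg_one_of_neg h, abs_of_neg (by exact_mod_cast h)]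
      push_cast; ring
    · rw [Int.sign_eq_one_of_pos h, abs_of_pos (by exact_mod_cast h)]
      push_cast; ring
  have hdval : v₁ℝ 0 * v₂ℝ 1 - v₁ℝ 1 * v₂ℝ 0 = ((d : ℤ) : ℝ) := by
    simp only [v₁ℝ, v₂ℝ, hddef]; push_cast; ring
  ext y
  simp only [Set.mem_image, Set.mem_setOf_eq]
  constructor
  · rintro ⟨x, hx, rfl⟩
    choose m hm using hx
    set k : ℤ := v₁ 0 * m 1 - v₁ 1 * m 0 with hk
    refine ⟨k * Int.sign d, ?_⟩
    rw [hrhs, eq_comm, key]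
    simp only [Pi.smul_apply, smul_eq_mul]
    rw [hm 0, hm 1]
    have : v₁ℝ 0 * ((((k * Int.sign d : ℤ) : ℝ)) * (|((d : ℤ) : ℝ)|)⁻¹ * v₂ℝ 1)
        - v₁ℝ 1 * ((((k * Int.sign d : ℤ) : ℝ)) * (|((d : ℤ) : ℝ)|)⁻¹ * v₂ℝ 0)
        = (((k * Int.sign d : ℤ) : ℝ)) * (|((d : ℤ) : ℝ)|)⁻¹ * ((d : ℤ) : ℝ) := by
      rw [← hdval]; ring
    rw [this]
    have hks : (((k * Int.sign d : ℤ) : ℝ)) = (k : ℝ) * ((Int.sign d : ℤ) : ℝ) := by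
      push_cast; ring
    rw [hks]
    have hL2 : v₁ℝ 0 * ((m 1 : ℤ) : ℝ) - v₁ℝ 1 * ((m 0 : ℤ) : ℝ) = (k : ℝ) := by
      simp only [v₁ℝ, hk]; push_cast; ring
    have hfin : (k : ℝ) * ((Int.sign d : ℤ) : ℝ) * (|((d : ℤ) : ℝ)|)⁻¹ * ((d : ℤ) : ℝ)
        = (k : ℝ) := by
      field_simp
      linear_combination (k : ℝ) * hsign
    rw [hL2, hfin]
  · rintro ⟨n, rfl⟩
    obtain ⟨a, b, hab⟩ := hprim
    set m : ℤ := n * Int.sign d with hmdef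
    refine ⟨fun i => ((m * (![(-b : ℤ), a]) i : ℤ) : ℝ),
      fun i => ⟨m * (![(-b : ℤ), a]) i, rfl⟩, ?_⟩
    rw [hrhs, key]
    have e0 : (![(-b : ℤ), a]) 0 = -b := rfl
    have e1 : (![(-b : ℤ), a]) 1 = a := rfl
    simp only [Pi.smul_apply, smul_eq_mul, e0, e1]
    have hL : v₁ℝ 0 * ((m * a : ℤ) : ℝ) - v₁ℝ 1 * ((m * (-b) : ℤ) : ℝ) = (m : ℝ) := by
      have : (a * v₁ 0 + b * v₁ 1 : ℤ) = 1 := hab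
      simp only [v₁ℝ]
      have hreal : (a : ℝ) * (v₁ 0 : ℝ) + (b : ℝ) * (v₁ 1 : ℝ) = 1 := by
        exact_mod_cast congrArg (Int.cast : ℤ → ℝ) this
      push_cast
      linear_combination (m : ℝ) * hreal
    rw [hL]
    have hR : v₁ℝ 0 * ((n : ℝ) * (|((d : ℤ) : ℝ)|)⁻¹ * v₂ℝ 1)
        - v₁ℝ 1 * ((n : ℝ) * (|((d : ℤ) : ℝ)|)⁻¹ * v₂ℝ 0)
        = (n : ℝ) * (|((d : ℤ) : ℝ)|)⁻¹ * ((d : ℤ) : ℝ) := by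
      rw [← hdval]; ring
    rw [hR, hmdef]
    have hs2 : ((Int.sign d : ℤ) : ℝ) * ((Int.sign d : ℤ) : ℝ) = 1 := by
      rcases hdet.lt_or_gt with h | h <;>
        simp [Int.sign_eq_neg_one_of_neg, Int.sign_eq_one_of_pos, h]
    have hds : ((d : ℤ) : ℝ) = ((Int.sign d : ℤ) : ℝ) * |((d : ℤ) : ℝ)| := by
      linear_combination ((Int.sign d : ℤ) : ℝ) * hsign - ((d : ℤ) : ℝ) * hs2
    have hdiv : ((d : ℤ) : ℝ) / |((d : ℤ) : ℝ)| = ((Int.sign d : ℤ) : ℝ) := by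
      rw [div_eq_iff habs]; exact hds
    push_cast
    rw [mul_assoc, mul_comm (|((d : ℤ) : ℝ)|)⁻¹, ← div_eq_mul_inv, hdiv]
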